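/- (GM-switching for signed graphs) Let A be a symmetric n×n real matrix with entries in {−1, 0, 1} and zero diagonal (the adjacency matrix of a signed graph Γ), and let π = {C_1, …, C_t, D} be a partition of the index set {1, …, n} with |C_i| = n_i. For a vertex v and a part C_i, let d_i^+(v) and d_i^−(v) be the number of indices w ∈ C_i with A_{vw} = 1 and A_{vw} = −1, respectively, and let d_i^±(v) = d_i^+(v) − d_i^−(v). Suppose: (1) for each 1 ≤ i, j ≤ t, any two vertices of C_i have the same j-th net-degree d_j^±; and (2) for each i and each v ∈ D, either d_i^±(v) = 0, or d_i^+(v) = n_i/2 and d_i^−(v) = 0, or d_i^−(v) = n_i/2 and d_i^+(v) = 0, or d_i^+(v) = n_i, or d_i^−(v) = n_i. Let A^π be the symmetric matrix obtained from A by, for every v ∈ D and every i: if d_i^±(v) = 0, negating all entries A_{vw} with w ∈ C_i; if d_i^+(v) = n_i/2 and d_i^−(v) = 0, replacing the column segment (A_{wv})_{w∈C_i} by its 0/1-complement; if d_i^−(v) = n_i/2 and d_i^+(v) = 0, replacing the column segment (A_{wv})_{w∈C_i} by its 0/(−1)-complement (i.e., by −1_{n_i} minus that segment); and leaving everything else unchanged.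 Then A and A^π have the same characteristic polynomial. -/

import Mathlib

open scoped Classical
open Matrix


section GMaux

variable {n t : ℕ} {C : Fin t → Finset (Fin n)}

/-- The GM switching matrix: block `(2/nᵢ)J − I` on each `C i`, identity elsewhere. -/
noncomputable def gmQ (C : Fin t → Finset (Fin n)) : Matrix (Fin n) (Fin n) ℝ :=
  fun u v => if h : ∃ i, u ∈ C i then
    (if v ∈ C h.choose then 2 / ((C h.choose).card : ℝ) else 0) - (if u = v then 1 else 0)
  else (if u = v then 1 else 0)

lemma gmQ_row_C (hCC : ∀ i j, i ≠ j → Disjoint (C i) (C j))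
    {i : Fin t} {u : Fin n} (hu : u ∈ C i) (v : Fin n) :
    gmQ C u v = (if v ∈ C i then 2 / ((C i).card : ℝ) else 0) - (if u = v then 1 else 0) := by
  have h : ∃ j, u ∈ C j := ⟨i, hu⟩
  have hch : h.choose = i := by
    by_contra hne
    exact Finset.disjoint_left.mp (hCC _ _ hne) h.choose_spec hu
  simp only [gmQ, dif_pos h, hch]

lemma gmQ_row_D {u : Fin n} (hu : ∀ i, u ∉ C i) (v : Fin n) :
    gmQ C u v = if u = v then 1 else 0 := by
  have h : ¬ ∃ i, u ∈ C i := by push_neg; exact hu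
  simp only [gmQ, dif_neg h]

lemma gmQ_col_C (hCC : ∀ i j, i ≠ j → Disjoint (C i) (C j))
    {j : Fin t} {v : Fin n} (hv : v ∈ C j) (x : Fin n) :
    gmQ C x v = (if x ∈ C j then 2 / ((C j).card : ℝ) else 0) - (if x = v then 1 else 0) := by
  by_cases hx : ∃ k, x ∈ C k
  · obtain ⟨k, hk⟩ := hx
    rw [gmQ_row_C hCC hk v]
    by_cases hkj : k = j
    · subst hkj; simp [hv, hk]
    · have h1 : v ∉ C k := Finset.disjoint_left.mp (hCC j k (Ne.symm hkj)) hv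
      have h2 : x ∉ C j := Finset.disjoint_left.mp (hCC k j hkj) hk
      have h3 : x ≠ v := fun e => h2 (e ▸ hv)
      simp [h1, h2, h3]
  · push_neg at hx
    rw [gmQ_row_D hx v]
    have h2 : x ∉ C j := hx j
    have h3 : x ≠ v := fun e => h2 (e ▸ hv)
    simp [h2, h3]

lemma gmQ_col_D (hCC : ∀ i j, i ≠ j → Disjoint (C i) (C j))
    {v : Fin n} (hv : ∀ i, v ∉ C i) (x : Fin n) :
    gmQ C x v = if x = v then 1 else 0 := by
  by_cases hx : ∃ k, x ∈ C k
  · obtain ⟨k, hk⟩ := hx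
    rw [gmQ_row_C hCC hk v]
    have h1 : v ∉ C k := hv k
    have h3 : x ≠ v := fun e => h1 (e ▸ hk)
    simp [h1, h3]
  · push_neg at hx
    exact gmQ_row_D hx v

lemma gmQ_mul_left (hCC : ∀ i j, i ≠ j → Disjoint (C i) (C j))
    (M : Matrix (Fin n) (Fin n) ℝ) {i : Fin t} {u : Fin n} (hu : u ∈ C i) (v : Fin n) :
    (gmQ C * M) u v = 2 / ((C i).card : ℝ) * ∑ w ∈ C i, M w v - M u v := by
  rw [Matrix.mul_apply]
  have : ∀ w, gmQ C u w * M w v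
      = (if w ∈ C i then 2 / ((C i).card : ℝ) * M w v else 0) -
        (if u = w then M w v else 0) := by
    intro w
    rw [gmQ_row_C hCC hu w, sub_mul]
    congr 1 <;> split <;> simp
  simp only [this, Finset.sum_sub_distrib, Finset.sum_ite_eq, Finset.mem_univ, if_true,
    ← Finset.sum_filter, Finset.filter_univ_mem, Finset.mul_sum]

lemma gmQ_mul_left_D (M : Matrix (Fin n) (Fin n) ℝ) {u : Fin n} (hu : ∀ i, u ∉ C i)
    (v : Fin n) : (gmQ C * M) u v = M u v := by
  rw [Matrix.mul_apply]
  simp [gmQ_row_D hu, ite_mul]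

lemma gmQ_mul_right (hCC : ∀ i j, i ≠ j → Disjoint (C i) (C j))
    (M : Matrix (Fin n) (Fin n) ℝ) {j : Fin t} {v : Fin n} (hv : v ∈ C j) (u : Fin n) :
    (M * gmQ C) u v = 2 / ((C j).card : ℝ) * ∑ x ∈ C j, M u x - M u v := by
  rw [Matrix.mul_apply]
  have : ∀ x, M u x * gmQ C x v
      = (if x ∈ C j then 2 / ((C j).card : ℝ) * M u x else 0) -
        (if x = v then M u x else 0) := by
    intro x
    rw [gmQ_col_C hCC hv x, mul_sub]
    congr 1 <;> split <;> simp [mul_comm]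
  simp only [this, Finset.sum_sub_distrib, Finset.sum_ite_eq', Finset.mem_univ, if_true,
    ← Finset.sum_filter, Finset.filter_univ_mem, Finset.mul_sum]

lemma gmQ_mul_right_D (hCC : ∀ i j, i ≠ j → Disjoint (C i) (C j))
    (M : Matrix (Fin n) (Fin n) ℝ) {v : Fin n} (hv : ∀ i, v ∉ C i)
    (u : Fin n) : (M * gmQ C) u v = M u v := by
  rw [Matrix.mul_apply]
  simp [gmQ_col_D hCC hv, mul_ite]

lemma gmQ_mul_self (hCC : ∀ i j, i ≠ j → Disjoint (C i) (C j)) :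
    gmQ C * gmQ C = 1 := by
  ext u v
  by_cases hu : ∃ i, u ∈ C i
  · obtain ⟨i, hi⟩ := hu
    rw [gmQ_mul_left hCC _ hi v]
    have h0 : ((C i).card : ℝ) ≠ 0 := by
      exact_mod_cast Finset.card_ne_zero_of_mem hi
    have hsum : ∑ w ∈ C i, gmQ C w v = if v ∈ C i then 1 else 0 := by
      rw [Finset.sum_congr rfl (fun w hw => gmQ_row_C hCC hw v), Finset.sum_sub_distrib,
        Finset.sum_const, Finset.sum_ite_eq' (C i) v (fun _ => (1:ℝ))]
      by_cases hv : v ∈ C i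
      · simp only [hv, if_true]; field_simp; linear_combination 2 * mul_inv_cancel₀ h0
      · simp [hv]
    rw [hsum, gmQ_row_C hCC hi v, Matrix.one_apply]
    by_cases hv : v ∈ C i <;> by_cases huv : u = v
    · simp [hv, huv]
    · simp only [hv, huv, if_true, if_false]; field_simp; ring
    · exact absurd (huv ▸ hi) hv
    · simp [hv, huv]
  · push_neg at hu
    rw [gmQ_mul_left_D _ hu, gmQ_row_D hu, Matrix.one_apply]

lemma sum_pm (s : Finset (Fin n)) (f : Fin n → ℝ) (hf : ∀ w ∈ s, f w = -1 ∨ f w = 0 ∨ f w = 1) :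
    ∑ w ∈ s, f w
      = ((s.filter (fun w => f w = 1)).card : ℝ) - ((s.filter (fun w => f w = -1)).card : ℝ) := by
  have : ∀ w ∈ s, f w = (if f w = 1 then (1:ℝ) else 0) - (if f w = -1 then 1 else 0) := by
    intro w hw
    rcases hf w hw with h | h | h <;> rw [h] <;> norm_num
  rw [Finset.sum_congr rfl this, Finset.sum_sub_distrib, Finset.sum_boole, Finset.sum_boole]

end GMaux

section conj
open Polynomial

lemma charpoly_conj_inv {N : ℕ} (Q M : Matrix (Fin N) (Fin N) ℝ) (hQ : Q * Q = 1) :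
    (Q * M * Q).charpoly = M.charpoly := by
  have hQc : Q.map Polynomial.C * Q.map Polynomial.C = (1 : Matrix (Fin N) (Fin N) ℝ[X]) := by
    rw [← Matrix.map_mul, hQ, Matrix.map_one _ (Polynomial.C_0) (Polynomial.C_1)]
  have hcomm : Commute (Matrix.scalar (Fin N) (X : ℝ[X])) (Q.map Polynomial.C) :=
    Matrix.scalar_commute _ (fun r' => Commute.all _ _) _
  have hcm : charmatrix (Q * M * Q)
      = Q.map Polynomial.C * charmatrix M * Q.map Polynomial.C := by
    simp only [charmatrix, RingHom.mapMatrix_apply]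
    rw [mul_sub, sub_mul, ← Matrix.map_mul, ← Matrix.map_mul]
    congr 1
    rw [← hcomm.eq, mul_assoc]
    rw [hQc, mul_one]
  rw [Matrix.charpoly, Matrix.charpoly, hcm, Matrix.det_mul, Matrix.det_mul, mul_comm,
    ← mul_assoc, ← Matrix.det_mul, hQc, Matrix.det_one, one_mul]

end conj

/-- **GM-switching for signed graphs.** Let `A` be the adjacency matrix of a signed
graph (symmetric `(−1,0,1)`-matrix with zero diagonal) and `π = {C 1, …, C t, D}` a
partition of the indices satisfying the signed GM conditions. Then the switched matrix
`A'` is cospectral with `A`. Here `d_i^+(v)`, `d_i^-(v)` are expressed with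
`Finset.filter`, and "`d_i^+(v) = n_i / 2`" is expressed as `2 * d_i^+(v) = n_i`. -/
theorem godsil_mckay_switching_signed (n t : ℕ)
    (A A' : Matrix (Fin n) (Fin n) ℝ)
    (hsym : A.IsSymm)
    (hent : ∀ u v, A u v = -1 ∨ A u v = 0 ∨ A u v = 1)
    (hdiag : ∀ v, A v v = 0)
    (C : Fin t → Finset (Fin n)) (D : Finset (Fin n))
    -- `π = {C 1, …, C t, D}` is a partition of the index set
    (hCC : ∀ i j, i ≠ j → Disjoint (C i) (C j))
    (hCD : ∀ i, Disjoint (C i) D)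
    (hcover : ∀ v, v ∈ D ∨ ∃ i, v ∈ C i)
    -- (1): any two vertices of `C i` have the same `j`-th net-degree
    (hequit : ∀ i j, ∀ u ∈ C i, ∀ v ∈ C i,
      (((C j).filter (fun w => A u w = 1)).card : ℤ) -
          ((C j).filter (fun w => A u w = -1)).card =
        (((C j).filter (fun w => A v w = 1)).card : ℤ) -
          ((C j).filter (fun w => A v w = -1)).card)
    -- (2): conditions on the vertices of `D`
    (hD : ∀ v ∈ D, ∀ i,
      (((C i).filter (fun w => A v w = 1)).card : ℤ) =
          ((C i).filter (fun w => A v w = -1)).card ∨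
      (2 * ((C i).filter (fun w => A v w = 1)).card = (C i).card ∧
        ((C i).filter (fun w => A v w = -1)).card = 0) ∨
      (2 * ((C i).filter (fun w => A v w = -1)).card = (C i).card ∧
        ((C i).filter (fun w => A v w = 1)).card = 0) ∨
      ((C i).filter (fun w => A v w = 1)).card = (C i).card ∨
      ((C i).filter (fun w => A v w = -1)).card = (C i).card)
    -- `A'` is symmetric
    (hsym' : A'.IsSymm)
    -- the switching rules between a vertex `v ∈ D` and the vertices `w ∈ C i`
    (hswitch : ∀ i, ∀ v ∈ D, ∀ w ∈ C i,
      ((((C i).filter (fun u => A v u = 1)).card : ℤ) =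
          ((C i).filter (fun u => A v u = -1)).card →
        A' v w = -A v w) ∧
      (2 * ((C i).filter (fun u => A v u = 1)).card = (C i).card ∧
          ((C i).filter (fun u => A v u = -1)).card = 0 →
        A' v w = 1 - A v w) ∧
      (2 * ((C i).filter (fun u => A v u = -1)).card = (C i).card ∧
          ((C i).filter (fun u => A v u = 1)).card = 0 →
        A' v w = -1 - A v w) ∧
      (((C i).filter (fun u => A v u = 1)).card = (C i).card → A' v w = A v w) ∧
      (((C i).filter (fun u => A v u = -1)).card = (C i).card → A' v w = A v w))
    -- all other entries are unchanged
    (hrest : ∀ u v, ¬ (∃ i, (u ∈ D ∧ v ∈ C i) ∨ (v ∈ D ∧ u ∈ C i)) →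
      A' u v = A u v) :
    A.charpoly = A'.charpoly := by
  have hAsymm : ∀ a b, A a b = A b a := fun a b => hsym.apply b a
  have hA'symm : ∀ a b, A' a b = A' b a := fun a b => hsym'.apply b a
  have hDC : ∀ u ∈ D, ∀ i, u ∉ C i := fun u hu i hi => Finset.disjoint_left.mp (hCD i) hi hu
  -- the key computation for a `D`-vertex against a block `C j`
  have key : ∀ v ∈ D, ∀ j, ∀ w ∈ C j,
      A' v w = 2 / ((C j).card : ℝ) * (∑ x ∈ C j, A v x) - A v w := by
    intro v hv j w hw
    have hj0 : ((C j).card : ℝ) ≠ 0 := by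
      exact_mod_cast Finset.card_ne_zero_of_mem hw
    have hS : ∑ x ∈ C j, A v x
        = (((C j).filter (fun x => A v x = 1)).card : ℝ)
          - (((C j).filter (fun x => A v x = -1)).card : ℝ) :=
      sum_pm _ _ (fun x _ => hent v x)
    obtain ⟨hs1, hs2, hs3, hs4, hs5⟩ := hswitch j v hv w hw
    rcases hD v hv j with h | ⟨h1, h2⟩ | ⟨h1, h2⟩ | h | h
    · have h' : (((C j).filter (fun x => A v x = 1)).card : ℝ)
          = ((C j).filter (fun x => A v x = -1)).card := by exact_mod_cast h
      rw [hs1 h, hS, h']; ring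
    · have h1' : 2 * (((C j).filter (fun x => A v x = 1)).card : ℝ) = ((C j).card : ℝ) := by
        exact_mod_cast h1
      rw [hs2 ⟨h1, h2⟩, hS, h2]
      push_cast
      field_simp
      linarith [h1']
    · have h1' : 2 * (((C j).filter (fun x => A v x = -1)).card : ℝ) = ((C j).card : ℝ) := by
        exact_mod_cast h1
      rw [hs3 ⟨h1, h2⟩, hS, h2]
      push_cast
      field_simp
      linarith [h1']
    · have hall : ∀ x ∈ C j, A v x = 1 := Finset.filter_card_eq h
      have hsum : ∑ x ∈ C j, A v x = ((C j).card : ℝ) := by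
        rw [Finset.sum_congr rfl hall]; simp
      rw [hs4 h, hsum, hall w hw]
      field_simp
      norm_num
    · have hall : ∀ x ∈ C j, A v x = -1 := Finset.filter_card_eq h
      have hsum : ∑ x ∈ C j, A v x = -((C j).card : ℝ) := by
        rw [Finset.sum_congr rfl hall]; simp
      rw [hs5 h, hsum, hall w hw]
      field_simp
      ring
  set Q := gmQ C with hQdef
  have hQQ : Q * Q = 1 := gmQ_mul_self hCC
  have hA' : Q * A * Q = A' := by
    ext u v
    rcases hcover u with hu | ⟨i, hi⟩
    · rcases hcover v with hv | ⟨j, hj⟩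
      · rw [gmQ_mul_right_D hCC _ (hDC v hv) u, gmQ_mul_left_D _ (hDC u hu) v]
        refine (hrest u v ?_).symm
        rintro ⟨i, ⟨-, hvC⟩ | ⟨-, huC⟩⟩
        · exact hDC v hv i hvC
        · exact hDC u hu i huC
      · rw [gmQ_mul_right hCC _ hj u,
          Finset.sum_congr rfl (fun x _ => gmQ_mul_left_D A (hDC u hu) x),
          gmQ_mul_left_D A (hDC u hu) v]
        exact (key u hu j v hj).symm
    · rcases hcover v with hv | ⟨j, hj⟩
      · rw [gmQ_mul_right_D hCC _ (hDC v hv) u, gmQ_mul_left hCC A hi v,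
          Finset.sum_congr rfl (fun w _ => hAsymm w v), hAsymm u v, hA'symm u v]
        exact (key v hv i u hi).symm
      · have hi0 : ((C i).card : ℝ) ≠ 0 := by
          exact_mod_cast Finset.card_ne_zero_of_mem hi
        have hj0 : ((C j).card : ℝ) ≠ 0 := by
          exact_mod_cast Finset.card_ne_zero_of_mem hj
        have huD : u ∉ D := Finset.disjoint_left.mp (hCD i) hi
        have hvD : v ∉ D := Finset.disjoint_left.mp (hCD j) hj
        have hA'A : A' u v = A u v := by
          refine hrest u v ?_
          rintro ⟨k, ⟨huD', -⟩ | ⟨hvD', -⟩⟩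
          · exact huD huD'
          · exact hvD hvD'
        rw [gmQ_mul_right hCC _ hj u,
          Finset.sum_congr rfl (fun x _ => gmQ_mul_left hCC A hi x),
          gmQ_mul_left hCC A hi v, hA'A]
        set s := ∑ x ∈ C j, A u x with hs
        set s' := ∑ w ∈ C i, A v w with hs'
        -- all rows of the `C i × C j` block have net sum `s`
        have hrow : ∀ w ∈ C i, ∑ x ∈ C j, A w x = s := by
          intro w hw
          rw [hs, sum_pm _ _ (fun x _ => hent w x), sum_pm _ _ (fun x _ => hent u x)]
          exact_mod_cast hequit i j w hw u hi
        have hcol : ∀ x ∈ C j, ∑ w ∈ C i, A x w = s' := by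
          intro x hx
          rw [hs', sum_pm _ _ (fun w _ => hent x w), sum_pm _ _ (fun w _ => hent v w)]
          exact_mod_cast hequit j i x hx v hj
        have hTv : ∑ w ∈ C i, A w v = s' := by
          rw [Finset.sum_congr rfl (fun w _ => hAsymm w v)]
        have hdouble1 : ∑ x ∈ C j, ∑ w ∈ C i, A w x = ((C i).card : ℝ) * s := by
          rw [Finset.sum_comm, Finset.sum_congr rfl hrow, Finset.sum_const, nsmul_eq_mul]
        have hdouble2 : ∑ x ∈ C j, ∑ w ∈ C i, A w x = ((C j).card : ℝ) * s' := by
          have : ∀ x ∈ C j, ∑ w ∈ C i, A w x = s' := by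
            intro x hx
            rw [Finset.sum_congr rfl (fun w _ => hAsymm w x)]
            exact hcol x hx
          rw [Finset.sum_congr rfl this, Finset.sum_const, nsmul_eq_mul]
        have hrel : ((C i).card : ℝ) * s = ((C j).card : ℝ) * s' := by
          rw [← hdouble1, hdouble2]
        have hbig : ∑ x ∈ C j, (2 / ((C i).card : ℝ) * ∑ w ∈ C i, A w x - A u x)
            = 2 / ((C i).card : ℝ) * (((C i).card : ℝ) * s) - s := by
          rw [Finset.sum_sub_distrib, ← Finset.mul_sum, hdouble1, hs]
        rw [hbig, hTv]
        field_simp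
        ring_nf
        nlinarith [hrel, sq_nonneg (((C i).card : ℝ) + (C j).card)]
  rw [← hA', charpoly_conj_inv Q A hQQ]
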